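/- Let n, m ∈ ℕ with n ≥ 1, m ≥ 2, let 0 < q_1 < ... < q_m < 1 be distinct reals, and let α_1, ..., α_m ∈ ℝ be not all zero. Let T be any trigonometric polynomial of degree at most n − 1. If the function K(t) − T(t), where K(t) = Σ_{i=1}^m α_i q_i sin t / (1 − 2 q_i cos t + q_i²), is not identically zero, then it has at most 2(n + m − 1) zeros (counted without multiplicity) in the half-open interval [0, 2π). -/

import Mathlib

open Finset Real

/-- `F` is (the real restriction of) a trigonometric polynomial of degree at most `d`. -/
def IsTP (d : ℕ) (F : ℝ → ℝ) : Prop :=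
  ∃ Q : Polynomial ℂ, Q.natDegree ≤ 2 * d ∧
    ∀ t : ℝ, (F t : ℂ) =
      Complex.exp (-(d : ℂ) * Complex.I * t) * Q.eval (Complex.exp (Complex.I * t))

lemma isTP_const (c : ℝ) : IsTP 0 (fun _ => c) := by
  refine ⟨Polynomial.C (c : ℂ), by simp, fun t => by simp⟩

lemma isTP_add {d : ℕ} {F G : ℝ → ℝ} (hF : IsTP d F) (hG : IsTP d G) :
    IsTP d (fun t => F t + G t) := by
  obtain ⟨Q1, h1, e1⟩ := hF
  obtain ⟨Q2, h2, e2⟩ := hG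
  refine ⟨Q1 + Q2, le_trans (Polynomial.natDegree_add_le _ _) (max_le h1 h2), fun t => ?_⟩
  push_cast
  rw [e1 t, e2 t, Polynomial.eval_add]
  ring

lemma isTP_smul {d : ℕ} (c : ℝ) {F : ℝ → ℝ} (hF : IsTP d F) :
    IsTP d (fun t => c * F t) := by
  obtain ⟨Q1, h1, e1⟩ := hF
  refine ⟨Polynomial.C (c:ℂ) * Q1, le_trans (Polynomial.natDegree_mul_le) (by simp [h1]), fun t => ?_⟩
  push_cast
  rw [e1 t, Polynomial.eval_mul, Polynomial.eval_C]
  ring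

lemma isTP_mul {d₁ d₂ : ℕ} {F G : ℝ → ℝ} (hF : IsTP d₁ F) (hG : IsTP d₂ G) :
    IsTP (d₁ + d₂) (fun t => F t * G t) := by
  obtain ⟨Q1, h1, e1⟩ := hF
  obtain ⟨Q2, h2, e2⟩ := hG
  refine ⟨Q1 * Q2, le_trans (Polynomial.natDegree_mul_le) (by omega), fun t => ?_⟩
  push_cast
  rw [e1 t, e2 t, Polynomial.eval_mul]
  rw [show (-((d₁:ℂ) + (d₂:ℂ)) * Complex.I * (t:ℂ)) =
    (-(d₁:ℂ) * Complex.I * t) + (-(d₂:ℂ) * Complex.I * t) by push_cast; ring, Complex.exp_add]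
  ring

lemma isTP_mono {d d' : ℕ} (h : d ≤ d') {F : ℝ → ℝ} (hF : IsTP d F) : IsTP d' F := by
  obtain ⟨Q1, h1, e1⟩ := hF
  refine ⟨Q1 * Polynomial.X ^ (d' - d), le_trans (Polynomial.natDegree_mul_le) ?_, fun t => ?_⟩
  · simp only [Polynomial.natDegree_X_pow]
    omega
  · rw [e1 t, Polynomial.eval_mul, Polynomial.eval_pow, Polynomial.eval_X,
      ← Complex.exp_nat_mul]
    rw [show Complex.exp (-(d:ℂ) * Complex.I * t) =
      Complex.exp (-(d':ℂ) * Complex.I * t) * Complex.exp ((↑(d' - d) : ℂ) * (Complex.I * t)) by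
        rw [← Complex.exp_add]; congr 1; push_cast [Nat.cast_sub h]; ring]
    ring

lemma isTP_sum {d : ℕ} {ι : Type*} [DecidableEq ι] (s : Finset ι) (f : ι → ℝ → ℝ)
    (h : ∀ i ∈ s, IsTP d (f i)) : IsTP d (fun t => ∑ i ∈ s, f i t) := by
  induction s using Finset.induction_on with
  | empty =>
      have := isTP_mono (Nat.zero_le d) (isTP_const 0)
      convert this using 1
      simp
  | insert x s' hx ih =>
      simp only [Finset.sum_insert hx]
      exact isTP_add (h x (Finset.mem_insert_self _ _))
        (ih fun i hi => h i (Finset.mem_insert_of_mem hi))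

lemma isTP_prod {ι : Type*} [DecidableEq ι] (s : Finset ι) (f : ι → ℝ → ℝ)
    (h : ∀ i ∈ s, IsTP 1 (f i)) : IsTP s.card (fun t => ∏ i ∈ s, f i t) := by
  induction s using Finset.induction_on with
  | empty =>
      have := isTP_const 1
      convert this using 2 <;> simp
  | insert x s' hx ih =>
      simp only [Finset.prod_insert hx, Finset.card_insert_of_notMem hx]
      rw [show s'.card + 1 = 1 + s'.card by ring]
      exact isTP_mul (h x (Finset.mem_insert_self _ _))
        (ih fun i hi => h i (Finset.mem_insert_of_mem hi))

lemma isTP_cos (j : ℕ) : IsTP j (fun t => Real.cos ((j : ℝ) * t)) := by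
  refine ⟨Polynomial.C (1/2 : ℂ) * (Polynomial.X ^ (2*j) + 1), ?_, fun t => ?_⟩
  · refine le_trans (Polynomial.natDegree_mul_le) ?_
    simp only [Polynomial.natDegree_C, zero_add]
    refine le_trans (Polynomial.natDegree_add_le _ _) (by simp)
  · rw [Complex.ofReal_cos]
    push_cast
    rw [Complex.cos]
    simp only [Polynomial.eval_mul, Polynomial.eval_C, Polynomial.eval_add,
      Polynomial.eval_pow, Polynomial.eval_X, Polynomial.eval_one]
    rw [← Complex.exp_nat_mul]
    rw [show ((j:ℂ) * t * Complex.I) = (j:ℂ) * Complex.I * t by ring,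
        show (-((j:ℂ) * t) * Complex.I) = -(j:ℂ) * Complex.I * t by ring]
    rw [show ((2*j : ℕ) : ℂ) * (Complex.I * t) = ((j:ℂ) * Complex.I * t) + ((j:ℂ) * Complex.I * t) by push_cast; ring,
      Complex.exp_add,
      show (-(j:ℂ) * Complex.I * t) = -((j:ℂ) * Complex.I * t) by ring, Complex.exp_neg]
    have hne := Complex.exp_ne_zero ((j:ℂ) * Complex.I * t)
    field_simp

lemma isTP_sin (j : ℕ) : IsTP j (fun t => Real.sin ((j : ℝ) * t)) := by
  refine ⟨Polynomial.C (Complex.I/2 : ℂ) * (1 - Polynomial.X ^ (2*j)), ?_, fun t => ?_⟩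
  · refine le_trans (Polynomial.natDegree_mul_le) ?_
    simp only [Polynomial.natDegree_C, zero_add]
    refine le_trans (Polynomial.natDegree_sub_le _ _) (by simp)
  · rw [Complex.ofReal_sin]
    push_cast
    rw [Complex.sin]
    simp only [Polynomial.eval_mul, Polynomial.eval_C, Polynomial.eval_sub,
      Polynomial.eval_pow, Polynomial.eval_X, Polynomial.eval_one]
    rw [← Complex.exp_nat_mul]
    rw [show ((j:ℂ) * t * Complex.I) = (j:ℂ) * Complex.I * t by ring,
        show (-((j:ℂ) * t) * Complex.I) = -(j:ℂ) * Complex.I * t by ring]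
    rw [show ((2*j : ℕ) : ℂ) * (Complex.I * t) = ((j:ℂ) * Complex.I * t) + ((j:ℂ) * Complex.I * t) by push_cast; ring,
      Complex.exp_add,
      show (-(j:ℂ) * Complex.I * t) = -((j:ℂ) * Complex.I * t) by ring, Complex.exp_neg]
    have hne := Complex.exp_ne_zero ((j:ℂ) * Complex.I * t)
    field_simp

lemma isTP_sin1 : IsTP 1 (fun t => Real.sin t) := by
  have h := isTP_sin 1
  have e : (fun t => Real.sin (((1:ℕ) : ℝ) * t)) = fun t => Real.sin t := by
    funext t; norm_num
  rwa [e] at h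

lemma isTP_cos1 : IsTP 1 (fun t => Real.cos t) := by
  have h := isTP_cos 1
  have e : (fun t => Real.cos (((1:ℕ) : ℝ) * t)) = fun t => Real.cos t := by
    funext t; norm_num
  rwa [e] at h

/-- A nonzero trig polynomial of degree ≤ d has at most 2d zeros in [0, 2π). -/
lemma isTP_zeros_bound {d : ℕ} {F : ℝ → ℝ} (h : IsTP d F) {t₀ : ℝ} (h0 : F t₀ ≠ 0) :
    {t ∈ Set.Ico (0 : ℝ) (2 * π) | F t = 0}.Finite ∧
      {t ∈ Set.Ico (0 : ℝ) (2 * π) | F t = 0}.ncard ≤ 2 * d := by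
  obtain ⟨Q, hdeg, hQ⟩ := h
  have hQne : Q ≠ 0 := by
    intro hq
    apply h0
    have h1 := hQ t₀
    rw [hq] at h1
    simpa using h1
  set S := {t ∈ Set.Ico (0 : ℝ) (2 * π) | F t = 0} with hS
  set φ : ℝ → ℂ := fun t => Complex.exp (Complex.I * t) with hφ
  have hmap : ∀ t ∈ S, Q.eval (φ t) = 0 := by
    intro t ht
    have h1 := hQ t
    rw [ht.2] at h1
    have hexp : Complex.exp (-(d:ℂ) * Complex.I * t) ≠ 0 := Complex.exp_ne_zero _
    have := (mul_eq_zero.mp h1.symm).resolve_left hexp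
    simpa [hφ] using this
  have hinj : Set.InjOn φ S := by
    intro t₁ h₁ t₂ h₂ heq
    simp only [hφ] at heq
    obtain ⟨k, hk⟩ := Complex.exp_eq_exp_iff_exists_int.mp heq
    have hk' : (t₁ : ℂ) = (t₂ : ℂ) + (k : ℂ) * (2 * π) := by
      have hI : (Complex.I : ℂ) ≠ 0 := Complex.I_ne_zero
      have : Complex.I * (t₁ : ℂ) = Complex.I * ((t₂ : ℂ) + (k:ℂ) * (2 * π)) := by
        rw [hk]; ring
      exact mul_left_cancel₀ hI this
    have hkR : t₁ = t₂ + (k : ℝ) * (2 * π) := by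
      exact_mod_cast hk'
    have hb₁ := h₁.1
    have hb₂ := h₂.1
    have hpos : (0:ℝ) < 2 * π := by positivity
    have hk0 : k = 0 := by
      rcases lt_trichotomy k 0 with hlt | he | hgt
      · have hk1 : k ≤ -1 := by omega
        have : (k : ℝ) ≤ -1 := by exact_mod_cast hk1
        nlinarith [hb₁.1, hb₂.2]
      · exact he
      · have : (1:ℝ) ≤ (k : ℝ) := by exact_mod_cast hgt
        nlinarith [hb₁.2, hb₂.1]
    rw [hk0] at hkR
    simpa using hkR
  have himg : φ '' S ⊆ (Q.roots.toFinset : Set ℂ) := by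
    rintro z ⟨t, ht, rfl⟩
    simp only [Finset.mem_coe, Multiset.mem_toFinset, Polynomial.mem_roots', Polynomial.IsRoot]
    exact ⟨hQne, hmap t ht⟩
  have hfin : S.Finite := by
    refine Set.Finite.of_finite_image ?_ hinj
    exact Set.Finite.subset (Q.roots.toFinset : Finset ℂ).finite_toSet himg
  refine ⟨hfin, ?_⟩
  calc S.ncard = (φ '' S).ncard := (Set.ncard_image_of_injOn hinj).symm
    _ ≤ ((Q.roots.toFinset : Finset ℂ) : Set ℂ).ncard :=
        Set.ncard_le_ncard himg (Q.roots.toFinset : Finset ℂ).finite_toSet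
    _ = Q.roots.toFinset.card := Set.ncard_coe_finset _
    _ ≤ Multiset.card Q.roots := Multiset.toFinset_card_le _
    _ ≤ Q.natDegree := Polynomial.card_roots' Q
    _ ≤ 2 * d := hdeg

theorem stmt7 (n m : ℕ) (hn : 1 ≤ n) (hm : 2 ≤ m) (q α : ℕ → ℝ)
    (hq01 : ∀ i ∈ Finset.Icc 1 m, 0 < q i ∧ q i < 1)
    (hinc : ∀ i j, 1 ≤ i → i < j → j ≤ m → q i < q j)
    (hα : ∃ i ∈ Finset.Icc 1 m, α i ≠ 0)
    (a b : ℕ → ℝ)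
    (K T : ℝ → ℝ)
    (hK : ∀ t, K t = ∑ i ∈ Finset.Icc 1 m,
        α i * q i * Real.sin t / (1 - 2 * q i * Real.cos t + q i ^ 2))
    (hT : ∀ t, T t = a 0 / 2 + ∑ j ∈ Finset.Icc 1 (n - 1),
        (a j * Real.cos (j * t) + b j * Real.sin (j * t)))
    (hne : ∃ t, K t - T t ≠ 0) :
    {t ∈ Set.Ico (0 : ℝ) (2 * π) | K t - T t = 0}.Finite ∧
      {t ∈ Set.Ico (0 : ℝ) (2 * π) | K t - T t = 0}.ncard ≤ 2 * (n + m - 1) := by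
  classical
  set Pi : ℕ → ℝ → ℝ := fun i t => 1 - 2 * q i * Real.cos t + q i ^ 2 with hPi
  set P : ℝ → ℝ := fun t => ∏ i ∈ Finset.Icc 1 m, Pi i t with hP
  -- positivity of the factors
  have hPipos : ∀ i ∈ Finset.Icc 1 m, ∀ t : ℝ, 0 < Pi i t := by
    intro i hi t
    obtain ⟨h0, h1⟩ := hq01 i hi
    have hc1 := Real.cos_le_one t
    have hc2 := Real.neg_one_le_cos t
    simp only [hPi]
    nlinarith
  have hPpos : ∀ t : ℝ, 0 < P t := by
    intro t
    exact Finset.prod_pos fun i hi => hPipos i hi t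
  -- each factor is a trig polynomial of degree 1
  have hPiTP : ∀ i : ℕ, IsTP 1 (Pi i) := by
    intro i
    have h := isTP_add (isTP_mono (Nat.zero_le 1) (isTP_const (1 + q i ^ 2)))
      (isTP_smul (-(2 * q i)) isTP_cos1)
    convert h using 1
    funext t
    simp only [hPi]
    ring
  -- K * P is a trig polynomial of degree ≤ n + m - 1
  have hKP : IsTP (n + m - 1) (fun t => K t * P t) := by
    have key : ∀ t : ℝ, K t * P t = ∑ i ∈ Finset.Icc 1 m,
        (α i * q i) * (Real.sin t * ∏ j ∈ (Finset.Icc 1 m).erase i, Pi j t) := by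
      intro t
      rw [hK, Finset.sum_mul]
      refine Finset.sum_congr rfl fun i hi => ?_
      have hPe : P t = Pi i t * ∏ j ∈ (Finset.Icc 1 m).erase i, Pi j t :=
        (Finset.mul_prod_erase _ _ hi).symm
      have hne' : Pi i t ≠ 0 := (hPipos i hi t).ne'
      rw [hPe]
      simp only [hPi] at hne' ⊢
      rw [div_mul_eq_mul_div, div_eq_iff hne']
      ring
    have h : IsTP (n + m - 1) (fun t => ∑ i ∈ Finset.Icc 1 m,
        (α i * q i) * (Real.sin t * ∏ j ∈ (Finset.Icc 1 m).erase i, Pi j t)) := by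
      refine isTP_sum _ _ fun i hi => ?_
      refine isTP_smul _ ?_
      have hcard : ((Finset.Icc 1 m).erase i).card = m - 1 := by
        rw [Finset.card_erase_of_mem hi, Nat.card_Icc]
        omega
      have h2 := isTP_mul isTP_sin1
        (isTP_prod ((Finset.Icc 1 m).erase i) (fun j => Pi j) (fun j _ => hPiTP j))
      rw [hcard] at h2
      exact isTP_mono (by omega) h2
    convert h using 1
    funext t
    exact key t
  -- T is a trig polynomial of degree ≤ n - 1
  have hTTP : IsTP (n - 1) T := by
    have h : IsTP (n - 1) (fun t => a 0 / 2 + ∑ j ∈ Finset.Icc 1 (n - 1),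
        (a j * Real.cos ((j : ℝ) * t) + b j * Real.sin ((j : ℝ) * t))) := by
      refine isTP_add (isTP_mono (Nat.zero_le _) ?_) (isTP_sum _ _ fun j hj => ?_)
      · have := isTP_const (a 0 / 2)
        convert this using 1
      · have hjle : j ≤ n - 1 := (Finset.mem_Icc.mp hj).2
        exact isTP_mono hjle
          (isTP_add (isTP_smul (a j) (isTP_cos j)) (isTP_smul (b j) (isTP_sin j)))
    convert h using 1
    funext t
    rw [hT t]
  -- F = (K - T) * P is a trig polynomial of degree ≤ n + m - 1
  set F : ℝ → ℝ := fun t => (K t - T t) * P t with hF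
  have hFTP : IsTP (n + m - 1) F := by
    have hTP : IsTP (n + m - 1) (fun t => T t * P t) := by
      have h := isTP_mul hTTP (isTP_prod (Finset.Icc 1 m) (fun j => Pi j) (fun j _ => hPiTP j))
      rw [Nat.card_Icc] at h
      have : n - 1 + (m + 1 - 1) = n + m - 1 := by omega
      rwa [this] at h
    have h := isTP_add hKP (isTP_smul (-1) hTP)
    convert h using 1
    funext t
    simp only [hF]
    ring
  -- F is not identically zero
  obtain ⟨t₀, ht₀⟩ := hne
  have hF0 : F t₀ ≠ 0 := mul_ne_zero ht₀ (hPpos t₀).ne'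
  -- zero sets coincide
  have hset : {t ∈ Set.Ico (0 : ℝ) (2 * π) | K t - T t = 0}
      = {t ∈ Set.Ico (0 : ℝ) (2 * π) | F t = 0} := by
    ext t
    simp only [Set.mem_setOf_eq, hF]
    constructor
    · rintro ⟨h1, h2⟩; exact ⟨h1, by rw [h2]; ring⟩
    · rintro ⟨h1, h2⟩
      refine ⟨h1, ?_⟩
      rcases mul_eq_zero.mp h2 with h | h
      · exact h
      · exact absurd h (hPpos t).ne'
  rw [hset]
  exact isTP_zeros_bound hFTP hF0
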